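/- Let k be a field of characteristic ≠ 2 and let A be a 4-dimensional unital division k-algebra with a Kleinian pair (α, β). Then, with respect to the trace bilinear form τ_A, the orthogonal complement of the fixed space E_β(1) equals E_β(−1); that is, {y ∈ A | τ_A(x, y) = 0 for all x with β(x) = x} = {y ∈ A | β(y) = −y}. -/
import Mathlib


open Module Function

variable {k : Type} [Field k]

/-- A Kleinian pair for a nonassociative `k`-algebra `(A, mul)`: a pair of distinct commuting
automorphisms, each of order 2. -/
def IsKleinPair {A : Type} [AddCommGroup A] [Module k A]
    (mul : A →ₗ[k] A →ₗ[k] A) (α β : A ≃ₗ[k] A) : Prop :=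
  (∀ x y : A, α (mul x y) = mul (α x) (α y)) ∧
  (∀ x y : A, β (mul x y) = mul (β x) (β y)) ∧
  (∀ x : A, α (α x) = x) ∧ (∀ x : A, β (β x) = x) ∧
  (∀ x : A, α (β x) = β (α x)) ∧
  α ≠ LinearEquiv.refl k A ∧ β ≠ LinearEquiv.refl k A ∧ α ≠ β

/-- The trace bilinear form `τ_A(x, y) = tr(L_{x·y})` of a finite-dimensional
nonassociative algebra. -/
noncomputable def traceForm {k A : Type} [Field k] [AddCommGroup A] [Module k A]
    (mul : A →ₗ[k] A →ₗ[k] A) (x y : A) : k :=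
  LinearMap.trace k A (mul (mul x y))

/-- If `p` is fixed and `q` is negated by `φ` and `p + q = 0`, then both vanish
(characteristic ≠ 2). -/
lemma fix_skew_zero {A : Type} [AddCommGroup A] [Module k A]
    (hchar : (2 : k) ≠ 0) (φ : A ≃ₗ[k] A) {p q : A}
    (hp : φ p = p) (hq : φ q = -q) (h : p + q = 0) : p = 0 ∧ q = 0 := by
  have h2 : p - q = 0 := by
    have h3 := congrArg φ h
    rw [map_add, hp, hq, map_zero, ← sub_eq_add_neg] at h3
    exact h3
  have hp2 : (2 : k) • p = 0 := by
    rw [two_smul]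
    calc p + p = (p + q) + (p - q) := by abel
    _ = 0 := by rw [h, h2, add_zero]
  have hp0 : p = 0 := (smul_eq_zero.mp hp2).resolve_left hchar
  exact ⟨hp0, by rwa [hp0, zero_add] at h⟩

/-- Left multiplication operators by `φ z` and by `z` are conjugate, hence have
the same trace. -/
lemma trace_mul_equiv {A : Type} [AddCommGroup A] [Module k A]
    (mul : A →ₗ[k] A →ₗ[k] A) (φ : A ≃ₗ[k] A)
    (hφ : ∀ x y : A, φ (mul x y) = mul (φ x) (φ y)) (z : A) :
    LinearMap.trace k A (mul (φ z)) = LinearMap.trace k A (mul z) := by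
  have h : mul (φ z) = φ.conj (mul z) := by
    ext y
    simp only [LinearEquiv.conj_apply, LinearMap.coe_comp, Function.comp_apply,
      LinearEquiv.coe_coe]
    rw [hφ, φ.apply_symm_apply]
  rw [h, LinearMap.trace_conj']

/-- If `φ z = -z` for an automorphism `φ`, then `tr L_z = 0` (characteristic ≠ 2). -/
lemma trace_mul_skew {A : Type} [AddCommGroup A] [Module k A]
    (hchar : (2 : k) ≠ 0) (mul : A →ₗ[k] A →ₗ[k] A) (φ : A ≃ₗ[k] A)
    (hφ : ∀ x y : A, φ (mul x y) = mul (φ x) (φ y)) (z : A) (hz : φ z = -z) :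
    LinearMap.trace k A (mul z) = 0 := by
  have h := trace_mul_equiv mul φ hφ z
  rw [hz, map_neg, map_neg] at h
  have h2 : (2 : k) * LinearMap.trace k A (mul z) = 0 := by linear_combination -h
  exact (mul_eq_zero.mp h2).resolve_left hchar

/-- In a division algebra with two distinct commuting involutive automorphisms `φ ≠ ψ`,
`φ ≠ id`, there is a nonzero vector negated by `φ` and fixed by `ψ`. -/
lemma exists_eigvec {A : Type} [AddCommGroup A] [Module k A]
    (hchar : (2 : k) ≠ 0) (mul : A →ₗ[k] A →ₗ[k] A)
    (hinj : ∀ a : A, a ≠ 0 → ∀ b : A, b ≠ 0 → mul a b ≠ 0)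
    (φ ψ : A ≃ₗ[k] A)
    (hφm : ∀ x y : A, φ (mul x y) = mul (φ x) (φ y))
    (hψm : ∀ x y : A, ψ (mul x y) = mul (ψ x) (ψ y))
    (hφ2 : ∀ x : A, φ (φ x) = x) (hψ2 : ∀ x : A, ψ (ψ x) = x)
    (hcomm : ∀ x : A, φ (ψ x) = ψ (φ x))
    (hφid : φ ≠ LinearEquiv.refl k A) (hφψ : φ ≠ ψ) :
    ∃ u : A, u ≠ 0 ∧ φ u = -u ∧ ψ u = u := by
  by_contra hC
  push_neg at hC
  have hzero : ∀ u : A, φ u = -u → ψ u = u → u = 0 := by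
    intro u h1 h2
    by_contra h0
    exact hC u h0 h1 h2
  obtain ⟨x, hx⟩ : ∃ x : A, φ x ≠ x := by
    by_contra h
    push_neg at h
    exact hφid (LinearEquiv.ext fun y => h y)
  set v : A := x - φ x with hvdef
  have hvne : v ≠ 0 := sub_ne_zero.mpr (Ne.symm hx)
  have hvφ : φ v = -v := by
    rw [hvdef, map_sub, hφ2]
    abel
  have hvψ : ψ v = -v := by
    have h1 : φ (v + ψ v) = -(v + ψ v) := by
      rw [map_add, hvφ, hcomm, hvφ, map_neg]
      abel
    have h2 : ψ (v + ψ v) = v + ψ v := by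
      rw [map_add, hψ2]
      abel
    have h3 := hzero _ h1 h2
    exact eq_neg_of_add_eq_zero_right h3
  by_cases hw : ∃ w : A, w ≠ 0 ∧ φ w = w ∧ ψ w = -w
  · obtain ⟨w, hw0, hwφ, hwψ⟩ := hw
    have hp1 : φ (mul w v) = -(mul w v) := by
      rw [hφm, hwφ, hvφ, map_neg]
    have hp2 : ψ (mul w v) = mul w v := by
      rw [hψm, hwψ, hvψ]
      simp [map_neg]
    exact hinj w hw0 v hvne (hzero _ hp1 hp2)
  · push_neg at hw
    have hzero' : ∀ u : A, φ u = u → ψ u = -u → u = 0 := by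
      intro u h1 h2
      by_contra h0
      exact hw u h0 h1 h2
    apply hφψ
    ext x'
    set z : A := φ x' - ψ x' with hzdef
    have hφz : φ z = x' - φ (ψ x') := by rw [hzdef, map_sub, hφ2]
    have hψz : ψ z = φ (ψ x') - x' := by rw [hzdef, map_sub, hψ2, hcomm]
    have hφψz : φ (ψ z) = -z := by
      rw [hcomm, hφz, map_sub, ← hcomm, hψ2, hzdef]
      abel
    have h1 : φ (z + ψ z) = -(z + ψ z) := by
      rw [map_add, hφψz, hφz, hψz]
      abel
    have h2 : ψ (z + ψ z) = z + ψ z := by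
      rw [map_add, hψ2]
      abel
    have hzp := hzero _ h1 h2
    have h3 : φ (z - ψ z) = z - ψ z := by
      rw [map_sub, hφψz, hφz, hψz]
      abel
    have h4 : ψ (z - ψ z) = -(z - ψ z) := by
      rw [map_sub, hψ2]
      abel
    have hzm := hzero' _ h3 h4
    have h2z : (2 : k) • z = 0 := by
      rw [two_smul]
      calc z + z = (z + ψ z) + (z - ψ z) := by abel
      _ = 0 := by rw [hzp, hzm, add_zero]
    have hz0 : z = 0 := (smul_eq_zero.mp h2z).resolve_left hchar
    have := sub_eq_zero.mp (hzdef ▸ hz0)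
    simpa using this

/-- Let `k` be a field of characteristic ≠ 2 and `A` a 4-dimensional unital
division `k`-algebra with a Kleinian pair `(α, β)`. Then, with respect to the trace bilinear
form `τ_A`, the orthogonal complement of the fixed space `E_β(1)` equals `E_β(−1)`. -/
theorem orthogonal_complement_of_fixed_space (hchar : (2 : k) ≠ 0)
    (A : Type) [AddCommGroup A] [Module k A] [FiniteDimensional k A]
    (mul : A →ₗ[k] A →ₗ[k] A) (one : A)
    (h4 : finrank k A = 4)
    (hone : ∀ x : A, mul one x = x ∧ mul x one = x)
    (hdiv : ∀ a : A, a ≠ 0 →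
      Function.Bijective (fun x => mul a x) ∧ Function.Bijective (fun x => mul x a))
    (α β : A ≃ₗ[k] A) (hkl : IsKleinPair mul α β) :
    {y : A | ∀ x : A, β x = x → traceForm mul x y = 0} = {y : A | β y = -y} := by
  obtain ⟨hαm, hβm, hα2, hβ2, hcomm, hαid, hβid, hαβ⟩ := hkl
  -- products of nonzero elements are nonzero
  have hinj : ∀ a : A, a ≠ 0 → ∀ b : A, b ≠ 0 → mul a b ≠ 0 := by
    intro a ha b hb h
    have h2 : (fun x => mul a x) b = (fun x => mul a x) 0 := by simp [h]
    exact hb ((hdiv a ha).1.injective h2)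
  -- the unit is nonzero
  have honene : one ≠ 0 := by
    intro h
    have hall : ∀ x : A, x = 0 := by
      intro x
      rw [← (hone x).1, h, map_zero, LinearMap.zero_apply]
    have hsub : Subsingleton A := ⟨fun a b => by rw [hall a, hall b]⟩
    rw [finrank_zero_of_subsingleton] at h4
    exact absurd h4 (by norm_num)
  -- every multiplicative automorphism fixes the unit
  have fixed_one : ∀ (φ : A ≃ₗ[k] A), (∀ x y : A, φ (mul x y) = mul (φ x) (φ y)) →
      φ one = one := by
    intro φ hφm
    have he : φ one ≠ 0 := fun h => honene (φ.map_eq_zero_iff.mp h)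
    have h1 : mul (φ one) (φ one) = φ one := by rw [← hφm, (hone one).1]
    have h2 : mul (φ one) one = φ one := (hone (φ one)).2
    exact (hdiv (φ one) he).1.injective
      (show mul (φ one) (φ one) = mul (φ one) one by rw [h1, h2])
  have hαone := fixed_one α hαm
  have hβone := fixed_one β hβm
  -- u ∈ A_{-+}, w ∈ A_{+-}, v ∈ A_{--}
  obtain ⟨u, hu0, huα, huβ⟩ :=
    exists_eigvec hchar mul hinj α β hαm hβm hα2 hβ2 hcomm hαid hαβ
  obtain ⟨w, hw0, hwβ, hwα⟩ :=
    exists_eigvec hchar mul hinj β α hβm hαm hβ2 hα2 (fun x => (hcomm x).symm) hβid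
      (Ne.symm hαβ)
  -- the third automorphism γ = β ∘ α
  set γ : A ≃ₗ[k] A := α.trans β with hγdef
  have hγ : ∀ x : A, γ x = β (α x) := fun x => rfl
  have hγm : ∀ x y : A, γ (mul x y) = mul (γ x) (γ y) := by
    intro x y
    rw [hγ, hαm, hβm, hγ, hγ]
  have hγ2 : ∀ x : A, γ (γ x) = x := by
    intro x
    rw [hγ, hγ, ← hcomm, hβ2, hα2]
  have hγcomm : ∀ x : A, β (γ x) = γ (β x) := by
    intro x
    rw [hγ, hγ, hβ2, hcomm, hβ2]
  have hβγ : β ≠ γ := by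
    intro h
    apply hαid
    ext x
    have h1 : β x = γ x := by rw [h]
    rw [hγ] at h1
    have := β.injective h1.symm
    simpa using this
  obtain ⟨v, hv0, hvβ, hvγ⟩ :=
    exists_eigvec hchar mul hinj β γ hβm hγm hβ2 hγ2 hγcomm hβid hβγ
  have hvα : α v = -v := by
    rw [hγ] at hvγ
    have := congrArg β hvγ
    rw [hβ2] at this
    rw [this, hvβ]
  -- {one, u, w, v} is linearly independent, hence a basis
  have li : LinearIndependent k ![one, u, w, v] := by
    rw [Fintype.linearIndependent_iff]
    intro g hg
    rw [Fin.sum_univ_four] at hg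
    simp only [Matrix.cons_val_zero, Matrix.cons_val_one, Matrix.head_cons,
      Matrix.cons_val_two, Matrix.tail_cons, Matrix.cons_val_three, Matrix.head_fin_const] at hg
    have hg' : (g 0 • one + g 1 • u) + (g 2 • w + g 3 • v) = 0 := by
      rw [← hg]; abel
    have hp : β (g 0 • one + g 1 • u) = g 0 • one + g 1 • u := by
      rw [map_add, map_smul, map_smul, hβone, huβ]
    have hq : β (g 2 • w + g 3 • v) = -(g 2 • w + g 3 • v) := by
      rw [map_add, map_smul, map_smul, hwβ, hvβ, smul_neg, smul_neg]
      abel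
    obtain ⟨hP, hQ⟩ := fix_skew_zero hchar β hp hq hg'
    have hp1 : α (g 0 • one) = g 0 • one := by rw [map_smul, hαone]
    have hq1 : α (g 1 • u) = -(g 1 • u) := by rw [map_smul, huα, smul_neg]
    obtain ⟨h0, h1⟩ := fix_skew_zero hchar α hp1 hq1 hP
    have hp2 : α (g 2 • w) = g 2 • w := by rw [map_smul, hwα]
    have hq2 : α (g 3 • v) = -(g 3 • v) := by rw [map_smul, hvα, smul_neg]
    obtain ⟨h2, h3⟩ := fix_skew_zero hchar α hp2 hq2 hQ
    have e0 : g 0 = 0 := (smul_eq_zero.mp h0).resolve_right honene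
    have e1 : g 1 = 0 := (smul_eq_zero.mp h1).resolve_right hu0
    have e2 : g 2 = 0 := (smul_eq_zero.mp h2).resolve_right hw0
    have e3 : g 3 = 0 := (smul_eq_zero.mp h3).resolve_right hv0
    intro i
    fin_cases i
    · exact e0
    · exact e1
    · exact e2
    · exact e3
  have hcard : Fintype.card (Fin 4) = finrank k A := by simp [h4]
  let b : Basis (Fin 4) k A := basisOfLinearIndependentOfCardEqFinrank li hcard
  have hb : ∀ i, b i = ![one, u, w, v] i := by
    intro i
    rw [show (b : Fin 4 → A) = ![one, u, w, v] from
      coe_basisOfLinearIndependentOfCardEqFinrank li hcard]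
  have expand : ∀ t : A, ∃ c0 c1 c2 c3 : k, t = c0 • one + c1 • u + c2 • w + c3 • v := by
    intro t
    refine ⟨b.repr t 0, b.repr t 1, b.repr t 2, b.repr t 3, ?_⟩
    have hs := b.sum_repr t
    rw [Fin.sum_univ_four, hb 0, hb 1, hb 2, hb 3] at hs
    simp only [Matrix.cons_val_zero, Matrix.cons_val_one, Matrix.head_cons,
      Matrix.cons_val_two, Matrix.tail_cons, Matrix.cons_val_three, Matrix.head_fin_const] at hs
    exact hs.symm
  -- β-fixed elements lie in the span of one and u
  have βfixed : ∀ t : A, β t = t → ∃ c0 c1 : k, t = c0 • one + c1 • u := by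
    intro t ht
    obtain ⟨c0, c1, c2, c3, hexp⟩ := expand t
    have hp : β ((c0 • one + c1 • u) - t) = (c0 • one + c1 • u) - t := by
      rw [map_sub, ht, map_add, map_smul, map_smul, hβone, huβ]
    have hq : β (c2 • w + c3 • v) = -(c2 • w + c3 • v) := by
      rw [map_add, map_smul, map_smul, hwβ, hvβ, smul_neg, smul_neg]
      abel
    have hsum : ((c0 • one + c1 • u) - t) + (c2 • w + c3 • v) = 0 := by
      rw [hexp]; abel
    obtain ⟨hP, _⟩ := fix_skew_zero hchar β hp hq hsum
    exact ⟨c0, c1, (sub_eq_zero.mp hP).symm⟩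
  -- u² = c0 • one with c0 ≠ 0
  have hu2β : β (mul u u) = mul u u := by rw [hβm, huβ]
  have hu2α : α (mul u u) = mul u u := by
    rw [hαm, huα]
    simp [map_neg]
  obtain ⟨c0, c1, hu2⟩ := βfixed (mul u u) hu2β
  have hp1 : α ((c0 • one) - mul u u) = (c0 • one) - mul u u := by
    rw [map_sub, map_smul, hαone, hu2α]
  have hq1 : α (c1 • u) = -(c1 • u) := by rw [map_smul, huα, smul_neg]
  have hsum1 : ((c0 • one) - mul u u) + c1 • u = 0 := by rw [hu2]; abel
  obtain ⟨hP1, hQ1⟩ := fix_skew_zero hchar α hp1 hq1 hsum1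
  have hu2' : mul u u = c0 • one := (sub_eq_zero.mp hP1).symm
  have hc0 : c0 ≠ 0 := by
    intro h
    apply hinj u hu0 u hu0
    rw [hu2', h, zero_smul]
  -- trace facts
  have hmulone : mul one = LinearMap.id := by
    ext x
    exact (hone x).1
  have htr1 : LinearMap.trace k A (mul one) = 4 := by
    rw [hmulone, LinearMap.trace_id, h4]
    norm_num
  have h4ne : (4 : k) ≠ 0 := by
    have h22 : (4 : k) = 2 * 2 := by norm_num
    rw [h22]
    exact mul_ne_zero hchar hchar
  have htru : LinearMap.trace k A (mul u) = 0 := trace_mul_skew hchar mul α hαm u huα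
  have htru2 : LinearMap.trace k A (mul (mul u u)) = c0 * 4 := by
    rw [hu2', map_smul, map_smul, smul_eq_mul, htr1]
  -- invariance of the trace form under β
  have hτinv : ∀ x y : A, traceForm mul (β x) (β y) = traceForm mul x y := by
    intro x y
    have h : mul (β x) (β y) = β (mul x y) := (hβm x y).symm
    simp only [traceForm, h]
    exact trace_mul_equiv mul β hβm (mul x y)
  ext y
  simp only [Set.mem_setOf_eq]
  constructor
  · intro hy
    set t : A := y + β y with htdef
    have htβ : β t = t := by
      rw [htdef, map_add, hβ2]
      abel
    have hτt : ∀ x : A, β x = x → traceForm mul x t = 0 := by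
      intro x hx
      have h1 : traceForm mul x (β y) = traceForm mul x y := by
        conv_lhs => rw [← hx]
        exact hτinv x y
      have hlin : traceForm mul x t = traceForm mul x y + traceForm mul x (β y) := by
        simp only [traceForm, htdef, map_add]
      rw [hlin, h1, hy x hx, add_zero]
    obtain ⟨d0, d1, ht⟩ := βfixed t htβ
    have e1 : traceForm mul one t = d0 * 4 := by
      have h1 : traceForm mul one t = LinearMap.trace k A (mul t) := by
        simp only [traceForm, (hone t).1]
      rw [h1, ht]
      rw [map_add, map_smul, map_smul, map_add, map_smul, map_smul, smul_eq_mul, smul_eq_mul,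
        htr1, htru, mul_zero, add_zero]
    have hd0 : d0 = 0 := by
      have h2 := hτt one hβone
      rw [e1] at h2
      exact (mul_eq_zero.mp h2).resolve_right h4ne
    have e2 : traceForm mul u t = d1 * (c0 * 4) := by
      simp only [traceForm]
      rw [ht, hd0, zero_smul, zero_add, map_smul, map_smul, map_smul, smul_eq_mul, htru2]
    have hd1 : d1 = 0 := by
      have h2 := hτt u huβ
      rw [e2] at h2
      rcases mul_eq_zero.mp h2 with h | h
      · exact h
      · exact absurd h (mul_ne_zero hc0 h4ne)
    have ht0 : t = 0 := by rw [ht, hd0, hd1, zero_smul, zero_smul, add_zero]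
    have hyz : y + β y = 0 := by rw [← htdef]; exact ht0
    exact eq_neg_of_add_eq_zero_right hyz
  · intro hy x hx
    have h1 : traceForm mul x y = traceForm mul x (-y) := by
      conv_lhs => rw [← hτinv x y, hx, hy]
    have h2 : traceForm mul x (-y) = -traceForm mul x y := by
      simp only [traceForm, map_neg, LinearMap.neg_apply]
    have h3 : (2 : k) * traceForm mul x y = 0 := by
      have h4 := h1.trans h2
      linear_combination h4
    exact (mul_eq_zero.mp h3).resolve_left hchar
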